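/- Let x̂_{k:N} ∈ S^(N−k+1) and let f_{k:N} be a non-degenerate policy belonging to 𝔓(x̂_{k:N}). Then for every j ∈ {k, …, N}, μ_{j|j}({x ∈ S : d(x, x̂_j)² ≤ c'_j}) = 1; that is, conditionally on no transmission up to time j, the state lies in the closed d-ball of radius √(c'_j) around x̂_j with probability one. -/

import Mathlib

open MeasureTheory Filter
open scoped ENNReal NNReal Topology

noncomputable section

/-- The state space `S = ℝ² × [0, 2π)`. -/
abbrev S : Type := {x : ℝ × ℝ × ℝ // x.2.2 ∈ Set.Ico (0 : ℝ) (2 * Real.pi)}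

/-- The metric `d` on `S`. -/
noncomputable def dS (x y : S) : ℝ :=
  Real.sqrt ((x.1.1 - y.1.1) ^ 2 + (x.1.2.1 - y.1.2.1) ^ 2
    + 2 * (Real.cos x.1.2.2 - Real.cos y.1.2.2) ^ 2
    + 2 * (Real.sin x.1.2.2 - Real.sin y.1.2.2) ^ 2)

/-- The initial state `x₀ = (0,0,0)`. -/
def origin : S := ⟨(0, 0, 0), ⟨le_rfl, by positivity⟩⟩

/-- `κ` is a Markov kernel on `S`. -/
def IsMarkov (κ : S → Measure S) : Prop :=
  (∀ x, IsProbabilityMeasure (κ x)) ∧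
    ∀ A : Set S, MeasurableSet A → Measurable fun x => κ x A

/-- Continuity of a real-valued function with respect to the metric `dS`. -/
def DContinuous (g : S → ℝ) : Prop :=
  ∀ x : S, ∀ ε : ℝ, 0 < ε → ∃ δ : ℝ, 0 < δ ∧ ∀ y : S, dS x y < δ → |g y - g x| < ε

/-- Openness with respect to the metric `dS`. -/
def DOpen (O : Set S) : Prop :=
  ∀ x ∈ O, ∃ δ : ℝ, 0 < δ ∧ ∀ y : S, dS x y < δ → y ∈ O

/-- Assumption 1 on the kernel `κ`. -/
def Assumption1 (κ : S → Measure S) : Prop :=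
  (∀ A : Set S, MeasurableSet A → DContinuous fun x => (κ x A).toReal) ∧
    ∀ O : Set S, DOpen O → O.Nonempty → ∀ x : S, 0 < κ x O

/-- Auxiliary downward value recursion; the first argument is the number
`N + 1 - j` of remaining stages. -/
noncomputable def Jaux (κ : S → Measure S) (c' : ℕ → ℝ) (xhat : ℕ → S) :
    ℕ → ℕ → S → ℝ≥0∞
  | 0, _, _ => 0
  | m + 1, j, x =>
      min (ENNReal.ofReal (dS x (xhat j) ^ 2) + ∫⁻ y, Jaux κ c' xhat m (j + 1) y ∂(κ x))
        (ENNReal.ofReal (c' j))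

/-- The optimal cost-to-go `J*_j(x, x̂_{j:N})`. -/
noncomputable def JJ (κ : S → Measure S) (c' : ℕ → ℝ) (N : ℕ) (xhat : ℕ → S)
    (j : ℕ) (x : S) : ℝ≥0∞ :=
  Jaux κ c' xhat (N + 1 - j) j x

/-- `G_j(x, x̂_{j:N}) = ∫ J*_j(y, x̂_{j:N}) κ(x)(dy)`. -/
noncomputable def Gj (κ : S → Measure S) (c' : ℕ → ℝ) (N : ℕ) (xhat : ℕ → S)
    (j : ℕ) (x : S) : ℝ≥0∞ :=
  ∫⁻ y, JJ κ c' N xhat j y ∂(κ x)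

/-- `G(x̂_{k:N}) = G_k(x₀, x̂_{k:N})`. -/
noncomputable def Gtot (κ : S → Measure S) (c' : ℕ → ℝ) (k N : ℕ) (xhat : ℕ → S) : ℝ≥0∞ :=
  Gj κ c' N xhat k origin

/-- A randomized policy: a tuple of Borel measurable functions `f_j : S → [0,1]`. -/
def IsPolicy (k N : ℕ) (f : ℕ → S → ℝ≥0∞) : Prop :=
  ∀ j, k ≤ j → j ≤ N → Measurable (f j) ∧ ∀ x, f j x ≤ 1

/-- Auxiliary cost-to-go recursion for a policy; first argument is `N + 1 - j`. -/
noncomputable def Vaux (κ : S → Measure S) (c' : ℕ → ℝ) (xhat : ℕ → S)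
    (f : ℕ → S → ℝ≥0∞) : ℕ → ℕ → S → ℝ≥0∞
  | 0, _, _ => 0
  | m + 1, j, x =>
      f j x * (ENNReal.ofReal (dS x (xhat j) ^ 2) + ∫⁻ y, Vaux κ c' xhat f m (j + 1) y ∂(κ x))
        + (1 - f j x) * ENNReal.ofReal (c' j)

/-- The cost-to-go `V_j` of a policy `f` with estimates `x̂`. -/
noncomputable def VV (κ : S → Measure S) (c' : ℕ → ℝ) (N : ℕ) (xhat : ℕ → S)
    (f : ℕ → S → ℝ≥0∞) (j : ℕ) (x : S) : ℝ≥0∞ :=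
  Vaux κ c' xhat f (N + 1 - j) j x

/-- The total expected cost `C(f_{k:N}, x̂_{k:N})`. -/
noncomputable def Cost (κ : S → Measure S) (c' : ℕ → ℝ) (k N : ℕ) (xhat : ℕ → S)
    (f : ℕ → S → ℝ≥0∞) : ℝ≥0∞ :=
  ∫⁻ y, VV κ c' N xhat f k y ∂(κ origin)

/-- `f ∈ 𝔓(x̂_{k:N})`: `f` minimizes the cost over all randomized policies. -/
def inP (κ : S → Measure S) (c' : ℕ → ℝ) (k N : ℕ) (xhat : ℕ → S)
    (f : ℕ → S → ℝ≥0∞) : Prop :=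
  IsPolicy k N f ∧
    ∀ g : ℕ → S → ℝ≥0∞, IsPolicy k N g → Cost κ c' k N xhat f ≤ Cost κ c' k N xhat g

/-- `x̂ ∈ 𝔛(f_{k:N})`: the estimates minimize the cost for the policy `f`. -/
def inX (κ : S → Measure S) (c' : ℕ → ℝ) (k N : ℕ) (f : ℕ → S → ℝ≥0∞)
    (xhat : ℕ → S) : Prop :=
  ∀ yhat : ℕ → S, Cost κ c' k N xhat f ≤ Cost κ c' k N yhat f

/-- Conditioning a measure on "no transmission" at stage `j`. -/
noncomputable def condMeas (f : ℕ → S → ℝ≥0∞) (j : ℕ) (μ : Measure S) : Measure S :=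
  (∫⁻ x, f j x ∂μ)⁻¹ • μ.withDensity (f j)

/-- The predicted measures `μ_{j|j−1}`, by recursion on `j - k`. -/
noncomputable def mupredAux (κ : S → Measure S) (f : ℕ → S → ℝ≥0∞) (k : ℕ) :
    ℕ → Measure S
  | 0 => κ origin
  | n + 1 => (condMeas f (k + n) (mupredAux κ f k n)).bind κ

/-- `μ_{j|j−1}`. -/
noncomputable def mupred (κ : S → Measure S) (f : ℕ → S → ℝ≥0∞) (k j : ℕ) : Measure S :=
  mupredAux κ f k (j - k)

/-- `q_j = ∫ f_j dμ_{j|j−1}`. -/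
noncomputable def qq (κ : S → Measure S) (f : ℕ → S → ℝ≥0∞) (k j : ℕ) : ℝ≥0∞ :=
  ∫⁻ x, f j x ∂(mupred κ f k j)

/-- `μ_{j|j}`. -/
noncomputable def mucond (κ : S → Measure S) (f : ℕ → S → ℝ≥0∞) (k j : ℕ) : Measure S :=
  condMeas f j (mupred κ f k j)

/-- Non-degeneracy of a policy. -/
def NonDeg (κ : S → Measure S) (f : ℕ → S → ℝ≥0∞) (k N : ℕ) : Prop :=
  ∀ j, k ≤ j → j ≤ N → 0 < qq κ f k j

/-- The closed "no transmission" region `D̄_j`. -/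
noncomputable def Dbar (κ : S → Measure S) (c' : ℕ → ℝ) (N : ℕ) (xhat : ℕ → S)
    (j : ℕ) : Set S :=
  {x : S | ENNReal.ofReal (dS x (xhat j) ^ 2) + ∫⁻ y, JJ κ c' N xhat (j + 1) y ∂(κ x)
      ≤ ENNReal.ofReal (c' j)}

/-- The open "no transmission" region `Ḏ_j`. -/
noncomputable def Dund (κ : S → Measure S) (c' : ℕ → ℝ) (N : ℕ) (xhat : ℕ → S)
    (j : ℕ) : Set S :=
  {x : S | ENNReal.ofReal (dS x (xhat j) ^ 2) + ∫⁻ y, JJ κ c' N xhat (j + 1) y ∂(κ x)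
      < ENNReal.ofReal (c' j)}

/-- Hypothesis (H). -/
def HypH (κ : S → Measure S) (c' : ℕ → ℝ) (k N : ℕ) : Prop :=
  ∀ j, k ≤ j → j ≤ N → ∃ xhat : ℕ → S, (Dund κ c' N xhat j).Nonempty

/-- Weak convergence of measures on `(S, dS)`: tested against `dS`-continuous
bounded functions. -/
def WeakConvS (μl : ℕ → Measure S) (μ : Measure S) : Prop :=
  ∀ h : S → ℝ, DContinuous h → (∃ C : ℝ, ∀ x, |h x| ≤ C) →
    Tendsto (fun l => ∫ x, h x ∂(μl l)) atTop (𝓝 (∫ x, h x ∂μ))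

/-- Convergence of a sequence of (non-degenerate) policies to a policy. -/
def PolConv (κ : S → Measure S) (k N : ℕ) (g : ℕ → ℕ → S → ℝ≥0∞)
    (f : ℕ → S → ℝ≥0∞) : Prop :=
  ∀ j, k ≤ j → j ≤ N →
    WeakConvS (fun l => mucond κ (g l) k j) (mucond κ f k j) ∧
      Tendsto (fun l => qq κ (g l) k j) atTop (𝓝 (qq κ f k j))

/-! ### Auxiliary material for the proof -/

/-- The remainder recursion used in the one-stage-deviation argument. -/
noncomputable def Raux (κ : S → Measure S) (f : ℕ → S → ℝ≥0∞) (E : S → ℝ≥0∞) (j : ℕ) :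
    ℕ → S → ℝ≥0∞
  | 0 => E
  | n + 1 => fun x => f (j - (n + 1)) x * ∫⁻ y, Raux κ f E j n y ∂(κ x)

lemma measKer {κ : S → Measure S} (hκ : IsMarkov κ) : Measurable κ :=
  Measure.measurable_of_measurable_coe _ fun s hs => hκ.2 s hs

lemma measLint {κ : S → Measure S} (hκm : Measurable κ) {h : S → ℝ≥0∞}
    (hh : Measurable h) : Measurable fun x => ∫⁻ y, h y ∂(κ x) :=
  (Measure.measurable_lintegral hh).comp hκm

lemma meas_dS (z : S) : Measurable fun x : S => dS x z := by
  unfold dS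
  have h1 : Measurable fun x : S => x.1.1 :=
    measurable_fst.comp measurable_subtype_coe
  have h2 : Measurable fun x : S => x.1.2.1 :=
    (measurable_fst.comp measurable_snd).comp measurable_subtype_coe
  have h3 : Measurable fun x : S => x.1.2.2 :=
    (measurable_snd.comp measurable_snd).comp measurable_subtype_coe
  exact Measurable.sqrt <| ((((h1.sub measurable_const).pow_const 2).add
    ((h2.sub measurable_const).pow_const 2)).add
    (measurable_const.mul (((Real.measurable_cos.comp h3).sub measurable_const).pow_const 2))).add
    (measurable_const.mul (((Real.measurable_sin.comp h3).sub measurable_const).pow_const 2))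

lemma Vaux_meas {κ : S → Measure S} (hκm : Measurable κ) {c' : ℕ → ℝ} {xhat : ℕ → S}
    {k N : ℕ} {f : ℕ → S → ℝ≥0∞} (hf : IsPolicy k N f) :
    ∀ m j, k ≤ j → j + m ≤ N + 1 → Measurable (Vaux κ c' xhat f m j) := by
  intro m
  induction m with
  | zero => intro j _ _; simp only [Vaux]; exact measurable_const
  | succ m ih =>
      intro j hkj hjm
      have hfj : Measurable (f j) := (hf j hkj (by omega)).1
      have hV : Measurable (Vaux κ c' xhat f m (j + 1)) := ih (j + 1) (by omega) (by omega)
      simp only [Vaux]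
      exact (hfj.mul ((((meas_dS (xhat j)).pow_const 2).ennreal_ofReal).add
        (measLint hκm hV))).add ((measurable_const.sub hfj).mul measurable_const)

lemma Vaux_congr {κ : S → Measure S} {c' : ℕ → ℝ} {xhat : ℕ → S}
    {f g : ℕ → S → ℝ≥0∞} :
    ∀ m j, (∀ i, j ≤ i → f i = g i) → Vaux κ c' xhat f m j = Vaux κ c' xhat g m j := by
  intro m
  induction m with
  | zero => intro j _; rfl
  | succ m ih =>
      intro j h
      funext x
      simp only [Vaux, h j le_rfl, ih (j + 1) fun i hi => h i (by omega)]
lemma ennreal_step (p a c : ℝ≥0∞) (hp : p ≤ 1) (hca : c ≤ a) :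
    p * a + (1 - p) * c = c + p * (a - c) := by
  calc p * a + (1 - p) * c = p * (c + (a - c)) + (1 - p) * c := by
        rw [add_tsub_cancel_of_le hca]
    _ = (p * c + (1 - p) * c) + p * (a - c) := by ring
    _ = 1 * c + p * (a - c) := by rw [← add_mul, add_tsub_cancel_of_le hp]
    _ = c + p * (a - c) := by rw [one_mul]

/-- If a non-degenerate policy `f` belongs to `𝔓(x̂_{k:N})`, then conditionally on
no transmission up to time `j`, the state lies in the closed `d`-ball of radius
`√(c'_j)` around `x̂_j` with probability one. -/
theorem conditional_state_in_ball (κ : S → Measure S) (hκ : IsMarkov κ)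
    (k N : ℕ) (hkN : k ≤ N) (c' : ℕ → ℝ) (hc' : ∀ j, k ≤ j → j ≤ N → 0 < c' j)
    (xhat : ℕ → S) (f : ℕ → S → ℝ≥0∞) (hnd : NonDeg κ f k N)
    (hP : inP κ c' k N xhat f) :
    ∀ j, k ≤ j → j ≤ N →
      mucond κ f k j {x : S | dS x (xhat j) ^ 2 ≤ c' j} = 1 := by
  obtain ⟨hfpol, hopt⟩ := hP
  have hκm : Measurable κ := measKer hκ
  haveI hμ0prob : IsProbabilityMeasure (κ origin) := hκ.1 origin
  intro j hkj hjN
  set c : ℝ≥0∞ := ENNReal.ofReal (c' j) with hc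
  set B : S → ℝ≥0∞ := fun x => ∫⁻ y, Vaux κ c' xhat f (N - j) (j + 1) y ∂(κ x) with hB
  set aJ : S → ℝ≥0∞ := fun x => ENNReal.ofReal (dS x (xhat j) ^ 2) + B x with haJ
  set A : Set S := {x | aJ x ≤ c} with hA
  set g : ℕ → S → ℝ≥0∞ := fun i => if i = j then A.indicator (f j) else f i with hg
  set E : S → ℝ≥0∞ := fun x => Aᶜ.indicator (fun x => f j x * (aJ x - c)) x with hE
  -- basic measurability facts
  have hfjm : Measurable (f j) := (hfpol j hkj hjN).1
  have hfjle : ∀ x, f j x ≤ 1 := (hfpol j hkj hjN).2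
  have hVjm : Measurable (Vaux κ c' xhat f (N - j) (j + 1)) :=
    Vaux_meas hκm hfpol _ _ (by omega) (by omega)
  have hBm : Measurable B := measLint hκm hVjm
  have haJm : Measurable aJ :=
    (((meas_dS (xhat j)).pow_const 2).ennreal_ofReal).add hBm
  have hAm : MeasurableSet A := haJm measurableSet_Iic
  have hEm : Measurable E :=
    (hfjm.mul (haJm.sub measurable_const)).indicator hAm.compl
  have hgpol : IsPolicy k N g := by
    intro i hki hiN
    by_cases hij : i = j
    · subst hij
      refine ⟨?_, ?_⟩
      · simp only [hg, if_pos rfl]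
        exact hfjm.indicator hAm
      · intro x
        simp only [hg, if_pos rfl]
        exact le_trans (Set.indicator_le_self _ _ x) (hfjle x)
    · simp only [hg, if_neg hij]; exact hfpol i hki hiN
  -- Step 1 : pointwise identity at stage j
  have claim1 : ∀ x, Vaux κ c' xhat f (N + 1 - j) j x
      = Vaux κ c' xhat g (N + 1 - j) j x + E x := by
    intro x
    have hNj : N + 1 - j = (N - j) + 1 := by omega
    rw [hNj]
    have hcong : Vaux κ c' xhat g (N - j) (j + 1) = Vaux κ c' xhat f (N - j) (j + 1) :=
      Vaux_congr (N - j) (j + 1) fun i hi => by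
        simp only [hg]; rw [if_neg (by omega)]
    simp only [Vaux, hcong]
    by_cases hx : x ∈ A
    · have hgx : g j x = f j x := by
        simp only [hg, if_pos rfl]; rw [Set.indicator_of_mem hx]
      have hEx : E x = 0 := by
        simp only [hE]; exact Set.indicator_of_notMem (by simpa using hx) _
      rw [hgx, hEx, add_zero]
    · have hgx : g j x = 0 := by
        simp only [hg, if_pos rfl]; rw [Set.indicator_of_notMem hx]
      have hEx : E x = f j x * (aJ x - c) := by
        simp only [hE]; rw [Set.indicator_of_mem (Set.mem_compl hx)]
      have hca : c ≤ aJ x := by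
        rw [hA] at hx
        exact le_of_lt (lt_of_not_ge hx)
      rw [hgx, hEx, zero_mul, zero_add, tsub_zero, one_mul]
      have := ennreal_step (f j x) (aJ x) c (hfjle x) hca
      simp only [haJ, hB] at this
      exact this
  -- Step 2 : propagation of the identity down to stage k
  have stepA : ∀ n i, i + n = j → k ≤ i → ∀ x,
      Vaux κ c' xhat f (N + 1 - i) i x
        = Vaux κ c' xhat g (N + 1 - i) i x + Raux κ f E j n x := by
    intro n
    induction n with
    | zero =>
        intro i hij hki x
        have hij' : i = j := by omega
        subst hij'
        simpa only [Raux] using claim1 x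
    | succ n ih =>
        intro i hij hki x
        have h1 : N + 1 - i = (N - i) + 1 := by omega
        have h2 : N + 1 - (i + 1) = N - i := by omega
        have hIH : ∀ y, Vaux κ c' xhat f (N - i) (i + 1) y
            = Vaux κ c' xhat g (N - i) (i + 1) y + Raux κ f E j n y := by
          intro y
          have := ih (i + 1) (by omega) (by omega) y
          rwa [h2] at this
        rw [h1]
        simp only [Vaux]
        rw [lintegral_congr hIH,
          lintegral_add_left (Vaux_meas hκm hgpol (N - i) (i + 1) (by omega) (by omega))]
        have hgi : g i = f i := by
          simp only [hg]; rw [if_neg (by omega)]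
        rw [hgi]
        have hR : Raux κ f E j (n + 1) x
            = f i x * ∫⁻ y, Raux κ f E j n y ∂(κ x) := by
          simp only [Raux]
          rw [show j - (n + 1) = i by omega]
        rw [hR]
        ring
  -- Step 3 : the total remainder has zero integral
  have costf : Cost κ c' k N xhat f
      = Cost κ c' k N xhat g + ∫⁻ x, Raux κ f E j (j - k) x ∂(κ origin) := by
    have h : ∀ x, VV κ c' N xhat f k x
        = VV κ c' N xhat g k x + Raux κ f E j (j - k) x :=
      fun x => stepA (j - k) k (by omega) le_rfl x
    unfold Cost
    rw [lintegral_congr h]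
    exact lintegral_add_left
      (show Measurable (VV κ c' N xhat g k) from
        Vaux_meas hκm hgpol (N + 1 - k) k le_rfl (by omega)) _
  have hzpol : IsPolicy k N (fun _ _ => 0) := fun i _ _ => ⟨measurable_const, fun _ => zero_le_one⟩
  have hcostz : Cost κ c' k N xhat (fun _ _ => 0) = ENNReal.ofReal (c' k) := by
    unfold Cost VV
    rw [show N + 1 - k = (N - k) + 1 by omega]
    simp only [Vaux, zero_mul, tsub_zero, one_mul, zero_add]
    rw [lintegral_const, measure_univ, mul_one]
  have hfin : Cost κ c' k N xhat f ≠ ∞ :=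
    ne_top_of_le_ne_top (by rw [hcostz]; exact ENNReal.ofReal_ne_top) (hopt _ hzpol)
  have hle : Cost κ c' k N xhat f ≤ Cost κ c' k N xhat g := hopt g hgpol
  have hge : Cost κ c' k N xhat g ≤ Cost κ c' k N xhat f := by
    rw [costf]; exact le_self_add
  have heq : Cost κ c' k N xhat f = Cost κ c' k N xhat g := le_antisymm hle hge
  have hgfin : Cost κ c' k N xhat g ≠ ∞ := by rw [← heq]; exact hfin
  have hr0 : ∫⁻ x, Raux κ f E j (j - k) x ∂(κ origin) = 0 := by
    have h2 : Cost κ c' k N xhat g + 0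
        = Cost κ c' k N xhat g + ∫⁻ x, Raux κ f E j (j - k) x ∂(κ origin) := by
      rw [add_zero, ← costf]; exact heq.symm
    exact ((ENNReal.add_right_inj hgfin).1 h2).symm
  -- measurability of the remainders
  have hRm : ∀ n, n ≤ j - k → Measurable (Raux κ f E j n) := by
    intro n
    induction n with
    | zero => intro _; exact hEm
    | succ n ih =>
        intro hn
        have hfm : Measurable (f (j - (n + 1))) := (hfpol _ (by omega) (by omega)).1
        simp only [Raux]
        exact hfm.mul (measLint hκm (ih (by omega)))
  -- the predicted measures are probability measures
  have hprobMu : ∀ n, k + n ≤ j → IsProbabilityMeasure (mupred κ f k (k + n)) := by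
    intro n
    induction n with
    | zero =>
        intro _
        have h00 : mupred κ f k (k + 0) = κ origin := by
          unfold mupred
          rw [show k + 0 - k = 0 by omega]
          simp only [mupredAux]
        rw [h00]; exact hκ.1 origin
    | succ n ih =>
        intro hn
        haveI hprev := ih (by omega)
        have hiN : k + n ≤ N := by omega
        have hq := hnd (k + n) (by omega) hiN
        have hq1 : qq κ f k (k + n) ≤ 1 := by
          unfold qq
          calc ∫⁻ x, f (k + n) x ∂(mupred κ f k (k + n))
              ≤ ∫⁻ _, 1 ∂(mupred κ f k (k + n)) :=
                lintegral_mono fun x => (hfpol (k + n) (by omega) hiN).2 x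
            _ = 1 := by rw [lintegral_one, measure_univ]
        have hbind : mupred κ f k (k + (n + 1))
            = (condMeas f (k + n) (mupred κ f k (k + n))).bind κ := by
          unfold mupred
          rw [show k + (n + 1) - k = n + 1 by omega, show k + n - k = n by omega]
          simp only [mupredAux]
        have hcm : (condMeas f (k + n) (mupred κ f k (k + n))) Set.univ = 1 := by
          unfold condMeas
          rw [Measure.smul_apply, smul_eq_mul,
            withDensity_apply _ MeasurableSet.univ, Measure.restrict_univ]
          exact ENNReal.inv_mul_cancel hq.ne' (ne_top_of_le_ne_top ENNReal.one_ne_top hq1)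
        rw [hbind]
        constructor
        rw [Measure.bind_apply MeasurableSet.univ hκm.aemeasurable]
        calc ∫⁻ x, (κ x) Set.univ ∂(condMeas f (k + n) (mupred κ f k (k + n)))
            = ∫⁻ _, 1 ∂(condMeas f (k + n) (mupred κ f k (k + n))) :=
              lintegral_congr fun x => (hκ.1 x).measure_univ
          _ = 1 := by rw [lintegral_one, hcm]
  -- Step 4 : propagate the zero integral up to stage j
  have stepC : ∀ n, n ≤ j - k →
      ∫⁻ x, Raux κ f E j (j - k - n) x ∂(mupred κ f k (k + n)) = 0 := by
    intro n
    induction n with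
    | zero =>
        intro _
        have h00 : mupred κ f k (k + 0) = κ origin := by
          unfold mupred
          rw [show k + 0 - k = 0 by omega]
          simp only [mupredAux]
        rw [show j - k - 0 = j - k from rfl, h00]
        exact hr0
    | succ n ih =>
        intro hn
        have h0 := ih (by omega)
        have hiN : k + n ≤ N := by omega
        have hsplit : j - k - n = (j - k - (n + 1)) + 1 := by omega
        rw [hsplit] at h0
        simp only [Raux] at h0
        rw [show j - (j - k - (n + 1) + 1) = k + n by omega] at h0
        have hbind : mupred κ f k (k + (n + 1))
            = (condMeas f (k + n) (mupred κ f k (k + n))).bind κ := by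
          unfold mupred
          rw [show k + (n + 1) - k = n + 1 by omega, show k + n - k = n by omega]
          simp only [mupredAux]
        have hRmeas : Measurable (Raux κ f E j (j - k - (n + 1))) := hRm _ (by omega)
        have hint : Measurable fun x => ∫⁻ y, Raux κ f E j (j - k - (n + 1)) y ∂(κ x) :=
          measLint hκm hRmeas
        have hfm : Measurable (f (k + n)) := (hfpol (k + n) (by omega) hiN).1
        rw [hbind, Measure.lintegral_bind hκm.aemeasurable hRmeas.aemeasurable]
        unfold condMeas
        rw [lintegral_smul_measure,
          lintegral_withDensity_eq_lintegral_mul _ hfm hint]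
        simp only [Pi.mul_apply]
        rw [h0, smul_zero]
  -- Step 5 : conclude E = 0 a.e. under μ_{j|j-1}
  have hfinal := stepC (j - k) le_rfl
  rw [show j - k - (j - k) = 0 by omega, show k + (j - k) = j by omega] at hfinal
  simp only [Raux] at hfinal
  have hae : E =ᵐ[mupred κ f k j] 0 := (lintegral_eq_zero_iff hEm).1 hfinal
  have hfj0 : ∀ᵐ x ∂(mupred κ f k j), dS x (xhat j) ^ 2 ≤ c' j ∨ f j x = 0 := by
    filter_upwards [hae] with x hx
    simp only [Pi.zero_apply] at hx
    by_cases hxA : x ∈ A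
    · left
      have h2 : aJ x ≤ c := by rw [hA] at hxA; exact hxA
      simp only [haJ] at h2
      have h3 : ENNReal.ofReal (dS x (xhat j) ^ 2) ≤ c := le_trans le_self_add h2
      rw [hc] at h3
      exact (ENNReal.ofReal_le_ofReal_iff (hc' j hkj hjN).le).1 h3
    · right
      simp only [hE] at hx
      rw [Set.indicator_of_mem (Set.mem_compl hxA)] at hx
      rcases mul_eq_zero.1 hx with h | h
      · exact h
      · exfalso
        rw [hA] at hxA
        exact hxA (tsub_eq_zero_iff_le.1 h)
  -- Step 6 : final computation of the conditional measure of the ball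
  set μj := mupred κ f k j with hμj
  have hμprob : IsProbabilityMeasure μj := by
    have := hprobMu (j - k) (by omega)
    rwa [show k + (j - k) = j by omega] at this
  have hq0 : qq κ f k j ≠ 0 := (hnd j hkj hjN).ne'
  have hq1 : qq κ f k j ≤ 1 := by
    unfold qq
    calc ∫⁻ x, f j x ∂(mupred κ f k j) ≤ ∫⁻ _, 1 ∂(mupred κ f k j) :=
          lintegral_mono fun x => hfjle x
      _ = 1 := by rw [lintegral_one]; exact hμprob.measure_univ
  have hqt : qq κ f k j ≠ ∞ := ne_top_of_le_ne_top ENNReal.one_ne_top hq1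
  have hBset : MeasurableSet {x : S | dS x (xhat j) ^ 2 ≤ c' j} :=
    ((meas_dS (xhat j)).pow_const 2) measurableSet_Iic
  have hwdc : (μj.withDensity (f j)) {x : S | dS x (xhat j) ^ 2 ≤ c' j}ᶜ = 0 := by
    rw [withDensity_apply _ hBset.compl]
    have hres : ∀ᵐ x ∂(μj.restrict {x : S | dS x (xhat j) ^ 2 ≤ c' j}ᶜ), f j x = 0 := by
      rw [ae_restrict_iff' hBset.compl]
      filter_upwards [hfj0] with x hx hxc
      rcases hx with h | h
      · exact absurd h hxc
      · exact h
    exact (lintegral_congr_ae hres).trans lintegral_zero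
  have hwdu : (μj.withDensity (f j)) Set.univ = qq κ f k j := by
    rw [withDensity_apply _ MeasurableSet.univ, Measure.restrict_univ]
    rfl
  have hwdB : (μj.withDensity (f j)) {x : S | dS x (xhat j) ^ 2 ≤ c' j} = qq κ f k j := by
    refine le_antisymm ?_ ?_
    · rw [← hwdu]; exact measure_mono (Set.subset_univ _)
    · calc qq κ f k j = (μj.withDensity (f j)) Set.univ := hwdu.symm
        _ = (μj.withDensity (f j))
            ({x : S | dS x (xhat j) ^ 2 ≤ c' j} ∪ {x : S | dS x (xhat j) ^ 2 ≤ c' j}ᶜ) := by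
            rw [Set.union_compl_self]
        _ ≤ (μj.withDensity (f j)) {x : S | dS x (xhat j) ^ 2 ≤ c' j}
            + (μj.withDensity (f j)) {x : S | dS x (xhat j) ^ 2 ≤ c' j}ᶜ :=
            measure_union_le _ _
        _ = (μj.withDensity (f j)) {x : S | dS x (xhat j) ^ 2 ≤ c' j} := by
            rw [hwdc, add_zero]
  show (mucond κ f k j) {x : S | dS x (xhat j) ^ 2 ≤ c' j} = 1
  rw [show mucond κ f k j = (qq κ f k j)⁻¹ • μj.withDensity (f j) from rfl,
    Measure.smul_apply, smul_eq_mul, hwdB]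
  exact ENNReal.inv_mul_cancel hq0 hqt

end
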